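/- Let ε ∈ (0,1) and β ∈ (0,1), and let N be a natural number with N ≥ (1+√3)²·ln(1/β)/ε. Set r := ⌈εN/2⌉. Then the binomial lower tail satisfies Σ_{i=0}^{r−1} C(N,i)·ε^i·(1−ε)^{N−i} ≤ β. -/

import Mathlib

/-- Sample complexity bound of Proposition 1 (eq. (11)): if
`N ≥ (1+√3)² ln(1/β)/ε` and `r = ⌈εN/2⌉`, the binomial lower tail
`Σ_{i=0}^{r-1} C(N,i) ε^i (1-ε)^{N-i}` is at most `β`. -/
theorem stmt5 (ε β : ℝ) (hε : ε ∈ Set.Ioo (0 : ℝ) 1) (hβ : β ∈ Set.Ioo (0 : ℝ) 1)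
    (N : ℕ) (hN : (1 + Real.sqrt 3) ^ 2 * Real.log (1 / β) / ε ≤ (N : ℝ)) :
    ∑ i ∈ Finset.range ⌈ε * (N : ℝ) / 2⌉₊,
      (N.choose i : ℝ) * ε ^ i * (1 - ε) ^ (N - i) ≤ β := by
  obtain ⟨hε0, hε1⟩ := hε
  obtain ⟨hβ0, hβ1⟩ := hβ
  set k := ⌈ε * (N : ℝ) / 2⌉₊ with hkdef
  rcases Nat.eq_zero_or_pos k with h0 | hk1
  · rw [h0]; simpa using hβ0.le
  have h1ε : (0:ℝ) ≤ 1 - ε := by linarith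
  have hhalf : (0:ℝ) ≤ 1 - ε / 2 := by linarith
  have hkc : ((k - 1 : ℕ) : ℝ) = (k : ℝ) - 1 := by
    rw [Nat.cast_sub hk1]; norm_num
  have hk_lt : ((k - 1 : ℕ) : ℝ) ≤ ε * N / 2 := by
    have h := Nat.ceil_lt_add_one (show (0:ℝ) ≤ ε * N / 2 by positivity)
    rw [hkc]; linarith
  have hkN : k ≤ N := by
    rw [hkdef, Nat.ceil_le]
    nlinarith [Nat.cast_nonneg (α := ℝ) N]
  -- Step 1: bound each term
  have step1 : ∑ i ∈ Finset.range k, (N.choose i : ℝ) * ε ^ i * (1 - ε) ^ (N - i)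
      ≤ 2 ^ (k - 1) * ∑ i ∈ Finset.range k,
        (N.choose i : ℝ) * (ε / 2) ^ i * (1 - ε) ^ (N - i) := by
    rw [Finset.mul_sum]
    apply Finset.sum_le_sum
    intro i hi
    have hik : i ≤ k - 1 := Nat.le_sub_one_of_lt (Finset.mem_range.mp hi)
    have h2 : (2:ℝ) ^ i ≤ 2 ^ (k - 1) := pow_le_pow_right₀ (by norm_num) hik
    have heq : (N.choose i : ℝ) * ε ^ i * (1 - ε) ^ (N - i)
        = 2 ^ i * ((N.choose i : ℝ) * (ε / 2) ^ i * (1 - ε) ^ (N - i)) := by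
      field_simp
      rw [mul_assoc, ← mul_pow]; ring_nf
    rw [heq]
    have hnn : (0:ℝ) ≤ (N.choose i : ℝ) * (ε / 2) ^ i * (1 - ε) ^ (N - i) := by
      positivity
    exact mul_le_mul_of_nonneg_right h2 hnn
  -- Step 2: sum of modified terms ≤ (1 - ε/2)^N
  have step2 : ∑ i ∈ Finset.range k,
      (N.choose i : ℝ) * (ε / 2) ^ i * (1 - ε) ^ (N - i) ≤ (1 - ε / 2) ^ N := by
    have hfull : (1 - ε / 2 : ℝ) ^ N = ∑ i ∈ Finset.range (N + 1),
        (N.choose i : ℝ) * (ε / 2) ^ i * (1 - ε) ^ (N - i) := by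
      have := add_pow (ε / 2) (1 - ε) N
      have h : (ε / 2 + (1 - ε) : ℝ) = 1 - ε / 2 := by ring
      rw [h] at this
      rw [this]
      apply Finset.sum_congr rfl
      intro i _; ring
    rw [hfull]
    apply Finset.sum_le_sum_of_subset_of_nonneg
    · exact Finset.range_subset_range.mpr (by omega)
    · intro i _ _; positivity
  -- Step 3: exponential bounds
  have hL : 0 < Real.log (1 / β) := Real.log_pos (by rw [lt_div_iff₀ hβ0]; linarith)
  have hεN : (1 + Real.sqrt 3) ^ 2 * Real.log (1 / β) ≤ ε * N := by
    rw [div_le_iff₀ hε0] at hN; nlinarith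
  have hs3 : Real.sqrt 3 ^ 2 = 3 := Real.sq_sqrt (by norm_num)
  have hs3' : (1.732 : ℝ) ≤ Real.sqrt 3 := by
    nlinarith [Real.sqrt_nonneg 3]
  have hlog2 : Real.log 2 < 0.6931471808 := Real.log_two_lt_d9
  have hlog2' : 0 ≤ Real.log 2 := Real.log_nonneg (by norm_num)
  have hexp : ((k - 1 : ℕ) : ℝ) * Real.log 2 - ε * N / 2 ≤ Real.log β := by
    have hlogβ : Real.log (1 / β) = - Real.log β := by
      rw [one_div, Real.log_inv]
    have hb1 : ((k - 1 : ℕ) : ℝ) * Real.log 2 ≤ ε * N / 2 * Real.log 2 :=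
      mul_le_mul_of_nonneg_right hk_lt hlog2'
    nlinarith [hεN, hL, hlogβ]
  have key : (2:ℝ) ^ (k - 1) * (1 - ε / 2) ^ N ≤ β := by
    have e1 : (2:ℝ) ^ (k - 1) = Real.exp (((k - 1 : ℕ) : ℝ) * Real.log 2) := by
      rw [Real.exp_nat_mul, Real.exp_log (by norm_num)]
    have e2 : (1 - ε / 2 : ℝ) ^ N ≤ Real.exp (- (ε * N / 2)) := by
      have h1 : (1 - ε / 2 : ℝ) ≤ Real.exp (-(ε / 2)) := by
        have := Real.add_one_le_exp (-(ε / 2)); linarith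
      calc (1 - ε / 2 : ℝ) ^ N ≤ Real.exp (-(ε / 2)) ^ N :=
            pow_le_pow_left₀ hhalf h1 N
        _ = Real.exp (- (ε * N / 2)) := by
            rw [← Real.exp_nat_mul]; ring_nf
    calc (2:ℝ) ^ (k - 1) * (1 - ε / 2) ^ N
        ≤ Real.exp (((k - 1 : ℕ) : ℝ) * Real.log 2) * Real.exp (- (ε * N / 2)) := by
          rw [e1]; exact mul_le_mul_of_nonneg_left e2 (Real.exp_pos _).le
      _ = Real.exp (((k - 1 : ℕ) : ℝ) * Real.log 2 - ε * N / 2) := by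
          rw [← Real.exp_add]; ring_nf
      _ ≤ Real.exp (Real.log β) := Real.exp_le_exp.mpr hexp
      _ = β := Real.exp_log hβ0
  calc ∑ i ∈ Finset.range k, (N.choose i : ℝ) * ε ^ i * (1 - ε) ^ (N - i)
      ≤ 2 ^ (k - 1) * ∑ i ∈ Finset.range k,
        (N.choose i : ℝ) * (ε / 2) ^ i * (1 - ε) ^ (N - i) := step1
    _ ≤ 2 ^ (k - 1) * (1 - ε / 2) ^ N :=
        mul_le_mul_of_nonneg_left step2 (by positivity)
    _ ≤ β := key
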